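/- Let H be a factorial commutative cancellative monoid and M a submonoid of H containing every unit of H. Then the following are equivalent: (i) for every a ∈ H and every square-free b ∈ H, a²·b ∈ M implies a ∈ M and a·b ∈ M; (iv) for every n ≥ 1 and square-free elements s₁,…,sₙ ∈ H with sᵢ dividing sᵢ₊₁ for i = 1,…,n−1, if s₁·s₂·⋯·sₙ ∈ M then s₁, s₂, …, sₙ ∈ M. -/

import Mathlib

namespace Stmt6Aux

/-! ### Splitting a list into even- and odd-position sublists -/

def sfSplit {α : Type*} : List α → List α × List α
  | [] => ([], [])
  | a :: l => (a :: (sfSplit l).2, (sfSplit l).1)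

@[simp] lemma sfSplit_nil {α : Type*} : sfSplit ([] : List α) = ([], []) := rfl
@[simp] lemma sfSplit_cons {α : Type*} (a : α) (l : List α) :
    sfSplit (a :: l) = (a :: (sfSplit l).2, (sfSplit l).1) := rfl

lemma sfSplit_mem {α : Type*} : ∀ (l : List α) (x : α),
    x ∈ l ↔ (x ∈ (sfSplit l).1 ∨ x ∈ (sfSplit l).2) := by
  intro l
  induction l with
  | nil => simp
  | cons a t ih =>
    intro x
    simp [ih x]
    tauto

lemma sfSplit_prod {H : Type*} [CommMonoid H] : ∀ (l : List H),
    (sfSplit l).1.prod * (sfSplit l).2.prod = l.prod := by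
  intro l
  induction l with
  | nil => simp
  | cons a t ih =>
    simp only [sfSplit_cons, List.prod_cons]
    rw [mul_assoc, mul_comm (sfSplit t).2.prod (sfSplit t).1.prod, ih]

lemma sfSplit_length {α : Type*} : ∀ (l : List α),
    (sfSplit l).1.length + (sfSplit l).2.length = l.length ∧
    (sfSplit l).2.length ≤ (sfSplit l).1.length ∧
    (sfSplit l).1.length ≤ (sfSplit l).2.length + 1 := by
  intro l
  induction l with
  | nil => simp
  | cons a t ih =>
    simp only [sfSplit_cons, List.length_cons]
    omega

lemma sfSplit_fst_head? {α : Type*} (l : List α) : ((sfSplit l).1).head? = l.head? := by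
  cases l <;> rfl

lemma sfSplit_chain {H : Type*} [CancelCommMonoid H] : ∀ (n : ℕ) (l : List H), l.length ≤ n →
    l.Chain' (fun a b => b ∣ a) →
    (sfSplit l).1.Chain' (fun a b => b ∣ a) ∧ (sfSplit l).2.Chain' (fun a b => b ∣ a) := by
  intro n
  induction n with
  | zero =>
    intro l hl _
    have : l = [] := List.length_eq_zero_iff.mp (Nat.le_zero.mp hl)
    subst this; simp [List.Chain']
  | succ n ih =>
    intro l hl hc
    match l with
    | [] => simp [List.Chain']
    | x :: t =>
      have hct : t.Chain' (fun a b => b ∣ a) := (List.isChain_cons.mp hc).2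
      have hxh : ∀ y ∈ t.head?, y ∣ x := (List.isChain_cons.mp hc).1
      have iht := ih t (by simp at hl; omega) hct
      refine ⟨?_, by simpa using iht.1⟩
      simp only [sfSplit_cons]
      refine List.isChain_cons.mpr ⟨?_, iht.2⟩
      intro z hz
      match t with
      | [] => simp at hz
      | y :: u =>
        simp only [sfSplit_cons] at hz
        rw [sfSplit_fst_head?] at hz
        have hyx : y ∣ x := hxh y rfl
        have hzy : z ∣ y := (List.isChain_cons.mp hct).1 z hz
        exact hzy.trans hyx

/-! ### Raw primes -/

variable {H : Type*} [CancelCommMonoid H]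

def RawPrime (p : H) : Prop := ¬ IsUnit p ∧ ∀ b c : H, p ∣ b * c → p ∣ b ∨ p ∣ c

lemma raw_irred {p : H} (hp : RawPrime p) {b c : H} (h : p = b * c) : IsUnit b ∨ IsUnit c := by
  rcases hp.2 b c (h ▸ dvd_refl p) with hb | hc
  · obtain ⟨f, rfl⟩ := hb
    right
    have h1 : p * 1 = p * (f * c) := by
      rw [mul_one]; conv_lhs => rw [h]
      rw [mul_assoc]
    have := mul_left_cancel h1
    exact IsUnit.of_mul_eq_one f (by rw [mul_comm, ← this])
  · obtain ⟨f, rfl⟩ := hc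
    left
    have h1 : p * 1 = p * (f * b) := by
      rw [mul_one]; conv_lhs => rw [h]
      rw [mul_comm b (p * f), mul_assoc]
    have := mul_left_cancel h1
    exact IsUnit.of_mul_eq_one f (by rw [mul_comm, ← this])

lemma raw_cancel {q y : H} (h : q * q ∣ q * y) : q ∣ y := by
  obtain ⟨e, he⟩ := h
  rw [mul_assoc] at he
  exact ⟨e, mul_left_cancel he⟩

lemma rawPrime_squarefree {p : H} (hp : RawPrime p) : Squarefree p := by
  intro c hc
  by_contra hcu
  obtain ⟨e, he⟩ := hc
  rw [mul_assoc] at he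
  rcases raw_irred hp he with h | h
  · exact hcu h
  · exact hcu (isUnit_of_mul_isUnit_left h)

lemma squarefree_prime_mul
    (hfact : ∀ a : H, IsUnit a ∨ ∃ l : Multiset H, (∀ p ∈ l, RawPrime p) ∧ l.prod = a)
    {p x : H} (hp : RawPrime p) (hpx : ¬ p ∣ x) (hx : Squarefree x) : Squarefree (p * x) := by
  intro c hc
  rcases hfact c with hu | ⟨l, hl, rfl⟩
  · exact hu
  rcases Multiset.empty_or_exists_mem l with rfl | ⟨q, hq⟩
  · simp
  exfalso
  have hqp : RawPrime q := hl q hq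
  have hqc : q ∣ l.prod := Multiset.dvd_prod hq
  have hqq : q * q ∣ p * x := (mul_dvd_mul hqc hqc).trans hc
  have hq_or : q ∣ p ∨ q ∣ x := hqp.2 p x (dvd_trans (dvd_mul_right q q) hqq)
  have hqp_px : q ∣ p → False := by
    intro ⟨r, hr⟩
    rcases raw_irred hp hr with h | h
    · exact hqp.1 h
    · have : q * q ∣ q * (r * x) := by rwa [← mul_assoc, ← hr]
      rcases hqp.2 r x (raw_cancel this) with h1 | h1
      · exact hqp.1 (isUnit_of_dvd_unit h1 h)
      · obtain ⟨y, rfl⟩ := h1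
        obtain ⟨ru, hru⟩ := h
        apply hpx
        refine ⟨(↑ru⁻¹ : Hˣ) * y, ?_⟩
        rw [hr, ← hru]
        simp [mul_assoc]
  rcases hq_or with h | h
  · exact hqp_px h
  · obtain ⟨y, rfl⟩ := h
    have : q * q ∣ q * (p * y) := by
      rw [← mul_assoc, mul_comm q p, mul_assoc]; exact hqq
    rcases hqp.2 p y (raw_cancel this) with h1 | h1
    · exact hqp_px h1
    · obtain ⟨z, rfl⟩ := h1
      exact hqp.1 (hx q ⟨z, (mul_assoc q q z).symm⟩)

lemma mul_dvd_squarefree {p x z : H} (hp : RawPrime p) (hpz : p ∣ z) (hxz : x ∣ z)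
    (hpx : ¬ p ∣ x) : p * x ∣ z := by
  obtain ⟨d, rfl⟩ := hxz
  rcases hp.2 x d hpz with h | h
  · exact absurd h hpx
  · obtain ⟨e, rfl⟩ := h
    exact ⟨e, by rw [← mul_assoc, mul_comm x p, mul_assoc]⟩

/-! ### The quotient element for a chain -/

lemma exists_b : ∀ (n : ℕ) (x : H) (t : List H), t.length ≤ n →
    (x :: t).Chain' (fun a b => b ∣ a) →
    ∃ b : H, (sfSplit (x :: t)).2.prod * b = (sfSplit (x :: t)).1.prod ∧ b ∣ x := by
  intro n
  induction n with
  | zero =>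
    intro x t ht _
    have : t = [] := List.length_eq_zero_iff.mp (Nat.le_zero.mp ht)
    subst this
    exact ⟨x, by simp, dvd_refl x⟩
  | succ n ih =>
    intro x t ht hc
    match t with
    | [] => exact ⟨x, by simp, dvd_refl x⟩
    | [y] =>
      have hyx : y ∣ x := (List.isChain_cons.mp hc).1 y rfl
      obtain ⟨d, rfl⟩ := hyx
      exact ⟨d, by simp [mul_comm], dvd_mul_left d y⟩
    | y :: z :: r =>
      have hc1 := List.isChain_cons.mp hc
      have hc2 := List.isChain_cons.mp hc1.2
      have hyx : y ∣ x := hc1.1 y rfl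
      have hzy : z ∣ y := hc2.1 z rfl
      have hczr : (z :: r).Chain' (fun a b => b ∣ a) := hc2.2
      obtain ⟨br, hbr, hbrz⟩ := ih z r (by simp at ht ⊢; omega) hczr
      obtain ⟨d, rfl⟩ := hyx
      simp only [sfSplit_cons, List.prod_cons] at hbr ⊢
      refine ⟨d * br, ?_, ?_⟩
      · rw [← hbr]
        simp [mul_comm, mul_left_comm, mul_assoc]
      · rw [mul_comm y d]
        exact mul_dvd_mul_left d (hbrz.trans hzy)

/-! ### Inserting a prime into a chain -/

open scoped Classical in
noncomputable def sfIns (p : H) : List H → List H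
  | [] => [p, p]
  | [x] => if p ∣ x then [x, p, p] else [p * x, p]
  | x :: y :: r => if p ∣ x then x :: sfIns p (y :: r) else p * x :: p * y :: r

lemma sfIns_nil (p : H) : sfIns p [] = [p, p] := rfl

lemma sfIns_cons_of_dvd (p x : H) (l : List H) (h : p ∣ x) :
    sfIns p (x :: l) = x :: sfIns p l := by
  cases l <;> simp [sfIns, h]

lemma sfIns_head?_of_dvd (p y : H) (r : List H) (h : p ∣ y) :
    (sfIns p (y :: r)).head? = some y := by
  cases r <;> simp [sfIns, h]

lemma sfIns_head?_of_not_dvd (p y : H) (r : List H) (h : ¬ p ∣ y) :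
    (sfIns p (y :: r)).head? = some (p * y) := by
  cases r <;> simp [sfIns, h]

lemma sfIns_spec
    (hfact : ∀ a : H, IsUnit a ∨ ∃ l : Multiset H, (∀ p ∈ l, RawPrime p) ∧ l.prod = a)
    {p : H} (hp : RawPrime p) :
    ∀ w : List H, (∀ x ∈ w, Squarefree x) → w.Chain' (fun a b => b ∣ a) →
    (∀ x ∈ sfIns p w, Squarefree x) ∧ (sfIns p w).Chain' (fun a b => b ∣ a) ∧
    (sfSplit (sfIns p w)).1.prod = p * (sfSplit w).1.prod ∧
    (sfSplit (sfIns p w)).2.prod = p * (sfSplit w).2.prod ∧ sfIns p w ≠ [] := by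
  intro w
  induction w with
  | nil =>
    intro _ _
    rw [sfIns_nil]
    refine ⟨?_, ?_, by simp, by simp, by simp⟩
    · intro x hx
      simp at hx
      subst hx
      exact rawPrime_squarefree hp
    · simp [List.Chain', List.isChain_cons, dvd_refl]
  | cons x l ih =>
    intro hsf hch
    have hx : Squarefree x := hsf x List.mem_cons_self
    by_cases hpx : p ∣ x
    · have he := sfIns_cons_of_dvd p x l hpx
      have hsl : ∀ y ∈ l, Squarefree y := fun y hy => hsf y (List.mem_cons_of_mem x hy)
      have hcl : l.Chain' (fun a b => b ∣ a) := (List.isChain_cons.mp hch).2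
      obtain ⟨ih1, ih2, ih3, ih4, ih5⟩ := ih hsl hcl
      rw [he]
      refine ⟨?_, ?_, ?_, ?_, by simp⟩
      · intro y hy
        rcases List.mem_cons.mp hy with rfl | hy
        · exact hx
        · exact ih1 y hy
      · refine List.isChain_cons.mpr ⟨?_, ih2⟩
        intro z hz
        match l with
        | [] =>
          rw [sfIns_nil] at hz
          simp at hz
          subst hz
          exact hpx
        | y :: r =>
          by_cases hpy : p ∣ y
          · rw [sfIns_head?_of_dvd p y r hpy] at hz
            simp at hz
            subst hz
            exact (List.isChain_cons.mp hch).1 _ rfl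
          · rw [sfIns_head?_of_not_dvd p y r hpy] at hz
            simp at hz
            subst hz
            have hyx : y ∣ x := (List.isChain_cons.mp hch).1 y rfl
            exact mul_dvd_squarefree hp hpx hyx hpy
      · simp [sfSplit_cons, List.prod_cons, ih4, mul_comm, mul_left_comm, mul_assoc]
      · simp [sfSplit_cons, List.prod_cons, ih3, mul_comm, mul_left_comm, mul_assoc]
    · match l with
      | [] =>
        have he : sfIns p [x] = [p * x, p] := by simp [sfIns, hpx]
        rw [he]
        refine ⟨?_, ?_, ?_, ?_, by simp⟩
        · intro y hy
          rcases List.mem_cons.mp hy with rfl | hy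
          · exact squarefree_prime_mul hfact hp hpx hx
          · simp at hy
            subst hy
            exact rawPrime_squarefree hp
        · exact List.isChain_cons.mpr ⟨fun z hz => by simp at hz; subst hz; exact dvd_mul_right p x,
            by simp [List.Chain']⟩
        · simp
        · simp
      | y :: r =>
        have he : sfIns p (x :: y :: r) = p * x :: p * y :: r := by
          simp [sfIns, hpx]
        have hyx : y ∣ x := (List.isChain_cons.mp hch).1 y rfl
        have hpy : ¬ p ∣ y := fun h => hpx (h.trans hyx)
        have hy : Squarefree y := hsf y (by simp)
        have hcyr : (y :: r).Chain' (fun a b => b ∣ a) := (List.isChain_cons.mp hch).2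
        rw [he]
        refine ⟨?_, ?_, ?_, ?_, by simp⟩
        · intro z hz
          rcases List.mem_cons.mp hz with rfl | hz
          · exact squarefree_prime_mul hfact hp hpx hx
          rcases List.mem_cons.mp hz with rfl | hz
          · exact squarefree_prime_mul hfact hp hpy hy
          · exact hsf z (by simp [hz])
        · refine List.isChain_cons.mpr ⟨fun z hz => ?_, ?_⟩
          · simp at hz; subst hz; exact mul_dvd_mul_left p hyx
          · refine List.isChain_cons.mpr ⟨fun z hz => ?_, (List.isChain_cons.mp hcyr).2⟩
            have hzy : z ∣ y := (List.isChain_cons.mp hcyr).1 z hz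
            exact hzy.trans (dvd_mul_left y p)
        · simp [mul_comm, mul_left_comm, mul_assoc]
        · simp [mul_comm, mul_left_comm, mul_assoc]

/-! ### Building a chain for `a² b` -/

lemma sfBuild
    (hfact : ∀ a : H, IsUnit a ∨ ∃ l : Multiset H, (∀ p ∈ l, RawPrime p) ∧ l.prod = a) :
    ∀ (l : Multiset H), (∀ p ∈ l, RawPrime p) → ∀ b : H, Squarefree b →
    ∃ w : List H, w ≠ [] ∧ (∀ x ∈ w, Squarefree x) ∧ w.Chain' (fun a b => b ∣ a) ∧
      (sfSplit w).1.prod = l.prod * b ∧ (sfSplit w).2.prod = l.prod := by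
  intro l
  induction l using Multiset.induction_on with
  | empty =>
    intro _ b hb
    exact ⟨[b], by simp, by simpa using hb, by simp [List.Chain'], by simp, by simp⟩
  | cons p l ih =>
    intro hpr b hb
    obtain ⟨w, hne, hsf, hch, h1, h2⟩ := ih (fun q hq => hpr q (Multiset.mem_cons_of_mem hq)) b hb
    have hp : RawPrime p := hpr p (Multiset.mem_cons_self p l)
    obtain ⟨i1, i2, i3, i4, i5⟩ := sfIns_spec hfact hp w hsf hch
    refine ⟨sfIns p w, i5, i1, i2, ?_, ?_⟩
    · rw [i3, h1, Multiset.prod_cons, mul_assoc]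
    · rw [i4, h2, Multiset.prod_cons]

/-! ### From condition (i) to membership of all chain elements -/

lemma sf_list_mem {M : Submonoid H}
    (hI : ∀ a b : H, Squarefree b → a ^ 2 * b ∈ M → a ∈ M ∧ a * b ∈ M) :
    ∀ (n : ℕ) (l : List H), l.length ≤ n → (∀ x ∈ l, Squarefree x) →
      l.Chain' (fun a b => b ∣ a) → l.prod ∈ M → ∀ x ∈ l, x ∈ M := by
  intro n
  induction n with
  | zero =>
    intro l hl _ _ _
    have : l = [] := List.length_eq_zero_iff.mp (Nat.le_zero.mp hl)
    subst this; simp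
  | succ n ih =>
    intro l hl hsf hch hm
    match l with
    | [] => simp
    | [x] =>
      intro y hy
      simp at hy
      subst hy
      simpa using hm
    | x :: y :: t =>
      obtain ⟨b, hb1, hb2⟩ := exists_b (y :: t).length x (y :: t) le_rfl hch
      have hbsf : Squarefree b := Squarefree.squarefree_of_dvd hb2 (hsf x (by simp))
      have key : (sfSplit (x :: y :: t)).2.prod ^ 2 * b = (x :: y :: t).prod := by
        rw [sq, mul_assoc, hb1, mul_comm, sfSplit_prod]
      obtain ⟨hA, hAb⟩ := hI _ b hbsf (key ▸ hm)
      have hfstM : (sfSplit (x :: y :: t)).1.prod ∈ M := hb1 ▸ hAb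
      have hsndM : (sfSplit (x :: y :: t)).2.prod ∈ M := hA
      have hlen := sfSplit_length (x :: y :: t)
      have hlen2 : (x :: y :: t).length = t.length + 2 := by simp
      have hchs := sfSplit_chain (x :: y :: t).length (x :: y :: t) le_rfl hch
      have hmem1 : ∀ z ∈ (sfSplit (x :: y :: t)).1, z ∈ M := by
        apply ih (sfSplit (x :: y :: t)).1 (by simp at hl; omega)
        · intro z hz
          exact hsf z ((sfSplit_mem _ z).mpr (Or.inl hz))
        · exact hchs.1
        · exact hfstM
      have hmem2 : ∀ z ∈ (sfSplit (x :: y :: t)).2, z ∈ M := by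
        apply ih (sfSplit (x :: y :: t)).2 (by simp at hl; omega)
        · intro z hz
          exact hsf z ((sfSplit_mem _ z).mpr (Or.inr hz))
        · exact hchs.2
        · exact hsndM
      intro z hz
      rcases (sfSplit_mem _ z).mp hz with h | h
      · exact hmem1 z h
      · exact hmem2 z h

end Stmt6Aux

open Stmt6Aux

theorem stmt_6 {H : Type*} [CancelCommMonoid H]
    (hfact : ∀ a : H, IsUnit a ∨ ∃ l : Multiset H, (∀ p ∈ l, ¬ IsUnit p ∧ ∀ b c : H, p ∣ b * c → p ∣ b ∨ p ∣ c) ∧ l.prod = a)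
    (M : Submonoid H) (hunits : ∀ u : H, IsUnit u → u ∈ M) :
    (∀ a b : H, Squarefree b → a ^ 2 * b ∈ M → a ∈ M ∧ a * b ∈ M) ↔
    (∀ n : ℕ, 1 ≤ n → ∀ s : Fin n → H, (∀ i, Squarefree (s i)) →
      (∀ i : ℕ, ∀ h : i + 1 < n, s ⟨i, Nat.lt_of_succ_lt h⟩ ∣ s ⟨i + 1, h⟩) →
      (∏ i, s i) ∈ M → ∀ i, s i ∈ M) := by
  have hfact' : ∀ a : H, IsUnit a ∨ ∃ l : Multiset H, (∀ p ∈ l, RawPrime p) ∧ l.prod = a :=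
    hfact
  constructor
  · -- (i) → (iv)
    intro hI n _hn s hsf hch hm i
    set l : List H := (List.ofFn s).reverse with hldef
    have hchain : l.Chain' (fun a b => b ∣ a) := by
      rw [hldef, List.Chain', List.isChain_reverse]
      rw [List.isChain_iff_getElem]
      intro j hj
      simp only [List.getElem_ofFn]
      simp only [List.length_ofFn] at hj
      have hj2 : j + 1 < n := by omega
      exact hch j hj2
    have hprod : l.prod ∈ M := by
      rw [hldef, List.prod_reverse, List.prod_ofFn]
      exact hm
    have hsf' : ∀ x ∈ l, Squarefree x := by
      intro x hx
      rw [hldef, List.mem_reverse, List.mem_ofFn] at hx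
      obtain ⟨j, rfl⟩ := hx
      exact hsf j
    have := sf_list_mem hI l.length l le_rfl hsf' hchain hprod
    apply this
    rw [hldef, List.mem_reverse, List.mem_ofFn]
    exact ⟨i, rfl⟩
  · -- (iv) → (i)
    intro hIV a b hbsf hab
    rcases hfact' a with hu | ⟨lp, hlp, hlprod⟩
    · refine ⟨hunits a hu, ?_⟩
      obtain ⟨u, rfl⟩ := hu
      have h1 : (↑u⁻¹ : H) ∈ M := hunits _ (Units.isUnit _)
      have h2 : (↑u⁻¹ : H) * ((↑u : H) ^ 2 * b) = ↑u * b := by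
        rw [sq]
        simp [mul_assoc]
      rw [← h2]
      exact M.mul_mem h1 hab
    · obtain ⟨w, hne, hwsf, hwch, h1, h2⟩ := sfBuild hfact' lp hlp b hbsf
      rw [hlprod] at h1 h2
      have hrne : w.reverse ≠ [] := by simpa using hne
      have hrlen : 1 ≤ w.reverse.length := by
        have := List.length_pos_iff.mpr hrne
        omega
      have hcr : (w.reverse).Chain' (· ∣ ·) := List.isChain_reverse.mpr hwch
      have hprod : (∏ i : Fin w.reverse.length, w.reverse.get i) ∈ M := by
        have h3 : (List.ofFn w.reverse.get).prod = ∏ i : Fin w.reverse.length, w.reverse.get i :=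
          List.prod_ofFn
        rw [← h3, List.ofFn_get, List.prod_reverse, ← sfSplit_prod, h1, h2,
          show a * b * a = a ^ 2 * b from by rw [mul_assoc, mul_comm b a, ← mul_assoc, ← sq]]
        exact hab
      have hall := hIV w.reverse.length hrlen w.reverse.get
        (fun i => hwsf _ (List.mem_reverse.mp (List.get_mem _ i)))
        (fun j hj => (List.isChain_iff_getElem.mp hcr) j (by omega))
        hprod
      have hallw : ∀ x ∈ w, x ∈ M := by
        intro x hx
        obtain ⟨i, hi⟩ := List.mem_iff_get.mp (List.mem_reverse.mpr hx)
        exact hi ▸ hall i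
      constructor
      · rw [← h2]
        exact Submonoid.list_prod_mem M
          (fun x hx => hallw x ((sfSplit_mem w x).mpr (Or.inr hx)))
      · rw [← h1]
        exact Submonoid.list_prod_mem M
          (fun x hx => hallw x ((sfSplit_mem w x).mpr (Or.inl hx)))
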